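/- Let A be the tree-expanded series with parameter w defined by A = Y + w (A / Y) + (Y ∖ A) + w (A / Y ∖ A), where Y is the one-vertex tree, and let B = Y − w (Y / B) − (B ∖ Y) − w (Y / B ∖ Y). Then A∘B = Y in the composition group of tree-expanded series, i.e., A is the compositional inverse of B. -/

import Mathlib

/-- Planar binary trees: a leaf, or an internal vertex with two subtrees. -/
inductive PBT : Type
  | leaf : PBT
  | node : PBT → PBT → PBT
  deriving DecidableEq

namespace PBT

/-- Number of internal vertices of a planar binary tree. -/
def size : PBT → ℕ
  | leaf => 0
  | node l r => size l + size r + 1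

/-- `under u v` ("u ∖ v") grafts `v` at the rightmost leaf of `u`. -/
def under : PBT → PBT → PBT
  | leaf, v => v
  | node l r, v => node l (under r v)

/-- `over u v` ("u / v") grafts `u` at the leftmost leaf of `v`. -/
def overT (u : PBT) : PBT → PBT
  | leaf => u
  | node l r => node (overT u l) r

/-- Number of internal vertices on the rightmost path (right spine). -/
def rightSpine : PBT → ℕ
  | leaf => 0
  | node _ r => rightSpine r + 1

/-- The left comb with `p` internal vertices. -/
def leftComb : ℕ → PBT
  | 0 => leaf
  | p + 1 => node (leftComb p) leaf

/-- The right comb with `q` internal vertices. -/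
def rightComb : ℕ → PBT
  | 0 => leaf
  | q + 1 => node leaf (rightComb q)

/-- The list of all factorizations `t = u ∖ v` (each exactly once). -/
def underFactors : PBT → List (PBT × PBT)
  | leaf => [(leaf, leaf)]
  | node l r => (leaf, node l r) :: (underFactors r).map (fun p => (node l p.1, p.2))

/-- The list of all factorizations `t = u / v` (each exactly once). -/
def overFactors : PBT → List (PBT × PBT)
  | leaf => [(leaf, leaf)]
  | node l r => (node l r, leaf) :: (overFactors l).map (fun p => (p.1, node p.2 r))

/-- Convolution of tree-expanded series dual to the over product:
`(A / B)_w = Σ_{s / t = w} A_s B_t`. -/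
def overConv {R : Type*} [CommRing R] (f g : PBT → R) (w : PBT) : R :=
  ((overFactors w).map (fun p => f p.1 * g p.2)).sum

/-- Convolution of tree-expanded series dual to the under product:
`(A ∖ B)_w = Σ_{s ∖ t = w} A_s B_t`. -/
def underConv {R : Type*} [CommRing R] (f g : PBT → R) (w : PBT) : R :=
  ((underFactors w).map (fun p => f p.1 * g p.2)).sum

/-- The list of all planar binary trees with `n` internal vertices. -/
def treesOfSize : ℕ → List PBT
  | 0 => [leaf]
  | n + 1 =>
    (List.range (n + 1)).attach.flatMap (fun i =>
      (treesOfSize i.1).flatMap (fun l =>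
        (treesOfSize (n - i.1)).map (fun r => node l r)))
  termination_by n => n
  decreasing_by
  all_goals first
    | exact List.mem_range.mp i.2
    | exact Nat.lt_succ_of_le (Nat.sub_le _ _)

/-- `treePow B t` is the series `B^t = μ_t(B,…,B)`, the substitution of the
series `B` in all internal vertices of `t` (duplicial operad composition),
using the decomposition `l ∨ r = (l / Y) ∖ r`. -/
def treePow {R : Type*} [CommRing R] (B : PBT → R) : PBT → PBT → R
  | leaf => fun w => if w = leaf then 1 else 0
  | node l r => underConv (overConv (treePow B l) B) (treePow B r)

/-- Composition of tree-expanded series: `(A ∘ B)_w = Σ_t A_t (B^t)_w`,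
where only trees with at most `|w|` vertices can contribute. -/
def comp {R : Type*} [CommRing R] (A B : PBT → R) (w : PBT) : R :=
  (((List.range (size w + 1)).flatMap treesOfSize).map
    (fun t => A t * treePow B t w)).sum

/-- The series reduced to the one-vertex tree `Y`. -/
def Yser {R : Type*} [CommRing R] : PBT → R :=
  fun t => if t = node leaf leaf then 1 else 0

/-- The series reduced to the root tree `|` (unit for the over/under products). -/
def unitSer {R : Type*} [CommRing R] : PBT → R :=
  fun t => if t = leaf then 1 else 0

/-- Suspension of a tree-expanded series: the coefficient on a tree with `n`
internal vertices is multiplied by `(-1)^(n-1)`. -/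
def susp {R : Type*} [CommRing R] (A : PBT → R) : PBT → R :=
  fun t => (-1 : R) ^ (size t + 1) * A t

/-- One covering step of the Tamari order: a right rotation
`(a ∨ b) ∨ c ⟶ a ∨ (b ∨ c)` somewhere in the tree. -/
inductive TamariStep : PBT → PBT → Prop
  | rot (a b c : PBT) : TamariStep (node (node a b) c) (node a (node b c))
  | left {l l' : PBT} (r : PBT) : TamariStep l l' → TamariStep (node l r) (node l' r)
  | right (l : PBT) {r r' : PBT} : TamariStep r r' → TamariStep (node l r) (node l r')

/-- The Tamari partial order on planar binary trees. -/
def tle : PBT → PBT → Prop := Relation.ReflTransGen TamariStep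

end PBT

namespace PBT

variable {R : Type*} [CommRing R]

/-! ### List sum helpers -/

lemma lsum_add {α : Type*} (L : List α) (f g : α → R) :
    (L.map (fun a => f a + g a)).sum = (L.map f).sum + (L.map g).sum := by
  induction L with
  | nil => simp
  | cons a t ih => simp [ih]; ring

lemma lsum_zero {α : Type*} (L : List α) :
    (L.map (fun _ : α => (0 : R))).sum = 0 := by
  simp

lemma lsum_mul_left {α : Type*} (L : List α) (c : R) (f : α → R) :
    (L.map (fun a => c * f a)).sum = c * (L.map f).sum := by
  induction L with
  | nil => simp
  | cons a t ih => simp [ih]; ring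

lemma lsum_mul_right {α : Type*} (L : List α) (c : R) (f : α → R) :
    (L.map (fun a => f a * c)).sum = (L.map f).sum * c := by
  induction L with
  | nil => simp
  | cons a t ih => simp [ih]; ring

lemma lsum_congr {α : Type*} {L : List α} {f g : α → R}
    (h : ∀ a ∈ L, f a = g a) : (L.map f).sum = (L.map g).sum := by
  rw [List.map_congr_left h]

lemma lsum_eq_zero {α : Type*} {L : List α} {f : α → R}
    (h : ∀ a ∈ L, f a = 0) : (L.map f).sum = 0 := by
  rw [lsum_congr h, lsum_zero]

lemma lsum_swap {α β : Type*} (L : List α) (M : List β) (f : α → β → R) :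
    (L.map (fun a => (M.map (f a)).sum)).sum
      = (M.map (fun b => (L.map (fun a => f a b)).sum)).sum := by
  induction L with
  | nil => simp [lsum_zero]
  | cons a t ih => simp [ih, lsum_add]

lemma lsum_fsum {α β : Type*} (L : List α) (s : Finset β) (f : α → β → R) :
    (L.map (fun a => ∑ b ∈ s, f a b)).sum = ∑ b ∈ s, (L.map (fun a => f a b)).sum := by
  induction L with
  | nil => simp
  | cons a t ih => simp [ih, Finset.sum_add_distrib]

lemma lsum_swap_mul {α β : Type*} (L : List α) (M : List β)
    (F : α → R) (G : α → β → R) (H : β → R) :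
    (M.map (fun b => (L.map (fun a => F a * G a b)).sum * H b)).sum
      = (L.map (fun a => F a * (M.map (fun b => G a b * H b)).sum)).sum := by
  have e1 : ∀ b ∈ M, (L.map (fun a => F a * G a b)).sum * H b
      = (L.map (fun a => F a * G a b * H b)).sum := by
    intro b _; rw [← lsum_mul_right]
  rw [lsum_congr e1, lsum_swap]
  apply lsum_congr
  intro a _
  rw [← lsum_mul_left M (F a) (fun b => G a b * H b)]
  apply lsum_congr
  intro b _
  ring

/-! ### Basic tree lemmas -/

@[simp] lemma size_leaf : size leaf = 0 := rfl
@[simp] lemma size_node (l r : PBT) : size (node l r) = size l + size r + 1 := rfl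

lemma size_eq_zero {t : PBT} (h : size t = 0) : t = leaf := by
  cases t with
  | leaf => rfl
  | node l r => simp [size] at h

@[simp] lemma over_leaf (u : PBT) : overT u leaf = u := rfl
@[simp] lemma over_node (u l r : PBT) : overT u (node l r) = node (overT u l) r := rfl
@[simp] lemma under_leaf (v : PBT) : under leaf v = v := rfl
@[simp] lemma under_node (l r v : PBT) : under (node l r) v = node l (under r v) := rfl

lemma size_over (u : PBT) : ∀ v : PBT, size (overT u v) = size u + size v := by
  intro v
  induction v with
  | leaf => simp
  | node l r ihl ihr => simp [ihl]; ring

lemma size_under (u v : PBT) : size (under u v) = size u + size v := by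
  induction u with
  | leaf => simp
  | node l r ihl ihr => simp [ihr]; ring

lemma mem_overFactors {w : PBT} : ∀ p ∈ overFactors w, overT p.1 p.2 = w := by
  induction w with
  | leaf =>
    intro p hp
    simp [overFactors] at hp
    simp [hp]
  | node l r ihl ihr =>
    intro p hp
    simp only [overFactors, List.mem_cons, List.mem_map] at hp
    rcases hp with rfl | ⟨q, hq, rfl⟩
    · rfl
    · simp [ihl q hq]

lemma mem_underFactors {w : PBT} : ∀ p ∈ underFactors w, under p.1 p.2 = w := by
  induction w with
  | leaf =>
    intro p hp
    simp [underFactors] at hp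
    simp [hp]
  | node l r ihl ihr =>
    intro p hp
    simp only [underFactors, List.mem_cons, List.mem_map] at hp
    rcases hp with rfl | ⟨q, hq, rfl⟩
    · rfl
    · simp [ihr q hq]

lemma size_overFactors {w : PBT} {p : PBT × PBT} (hp : p ∈ overFactors w) :
    size p.1 + size p.2 = size w := by
  rw [← mem_overFactors p hp, size_over]

lemma size_underFactors {w : PBT} {p : PBT × PBT} (hp : p ∈ underFactors w) :
    size p.1 + size p.2 = size w := by
  rw [← mem_underFactors p hp, size_under]

/-! ### Convolution: structural lemmas -/

lemma overConv_leaf (f g : PBT → R) : overConv f g leaf = f leaf * g leaf := by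
  simp [overConv, overFactors]

lemma overConv_node (f g : PBT → R) (l r : PBT) :
    overConv f g (node l r)
      = f (node l r) * g leaf + overConv f (fun x => g (node x r)) l := by
  simp [overConv, overFactors, List.map_map, Function.comp_def]

lemma underConv_leaf (f g : PBT → R) : underConv f g leaf = f leaf * g leaf := by
  simp [underConv, underFactors]

lemma underConv_node (f g : PBT → R) (l r : PBT) :
    underConv f g (node l r)
      = f leaf * g (node l r) + underConv (fun x => f (node l x)) g r := by
  simp [underConv, underFactors, List.map_map, Function.comp_def]

end PBT
namespace PBT

variable {R : Type*} [CommRing R]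

/-! ### Convolution: unit laws -/

@[simp] lemma unitSer_leaf : (unitSer : PBT → R) leaf = 1 := rfl
@[simp] lemma unitSer_node (l r : PBT) : (unitSer : PBT → R) (node l r) = 0 := by
  simp [unitSer]

lemma overConv_unit_right (f : PBT → R) (w : PBT) : overConv f unitSer w = f w := by
  cases w with
  | leaf => simp [overConv_leaf, unitSer]
  | node l r =>
    rw [overConv_node]
    have : (fun x => (unitSer : PBT → R) (node x r)) = fun _ => (0 : R) := by
      funext x; simp
    rw [this]
    simp [overConv, lsum_zero, unitSer]

lemma overConv_unit_left (f : PBT → R) : ∀ w, overConv unitSer f w = f w := by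
  intro w
  induction w generalizing f with
  | leaf => simp [overConv_leaf]
  | node l r ihl ihr =>
    rw [overConv_node, ihl]
    simp

lemma underConv_unit_left (f : PBT → R) (w : PBT) : underConv unitSer f w = f w := by
  cases w with
  | leaf => simp [underConv_leaf]
  | node l r =>
    rw [underConv_node]
    have : (fun x => (unitSer : PBT → R) (node l x)) = fun _ => (0 : R) := by
      funext x; simp
    rw [this]
    simp [underConv, lsum_zero]

lemma underConv_unit_right (f : PBT → R) : ∀ w, underConv f unitSer w = f w := by
  intro w
  induction w generalizing f with
  | leaf => simp [underConv_leaf]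
  | node l r ihl ihr =>
    rw [underConv_node, ihr]
    simp

/-! ### Convolution: linearity -/

lemma overConv_add_right (f g h : PBT → R) (w : PBT) :
    overConv f (fun x => g x + h x) w = overConv f g w + overConv f h w := by
  simp only [overConv, mul_add]
  exact lsum_add _ _ _

lemma overConv_mul_right (f g : PBT → R) (c : R) (w : PBT) :
    overConv f (fun x => g x * c) w = overConv f g w * c := by
  simp only [overConv, ← mul_assoc]
  exact lsum_mul_right _ _ _

lemma underConv_add_left (f g h : PBT → R) (w : PBT) :
    underConv (fun x => f x + g x) h w = underConv f h w + underConv g h w := by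
  simp only [underConv, add_mul]
  exact lsum_add _ _ _

lemma underConv_mul_left (f g : PBT → R) (c : R) (w : PBT) :
    underConv (fun x => c * f x) g w = c * underConv f g w := by
  simp only [underConv, mul_assoc]
  exact lsum_mul_left _ _ _

lemma underConv_zero_left (g : PBT → R) (w : PBT) :
    underConv (fun _ => (0 : R)) g w = 0 := by
  simp [underConv, lsum_eq_zero]

lemma overConv_zero_right (f : PBT → R) (w : PBT) :
    overConv f (fun _ => (0 : R)) w = 0 := by
  simp [overConv, lsum_eq_zero]

/-! ### Convolution: associativity -/

lemma overConv_assoc (f g : PBT → R) : ∀ (h : PBT → R) (w : PBT),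
    overConv (overConv f g) h w = overConv f (overConv g h) w := by
  intro h w
  induction w generalizing h with
  | leaf => simp [overConv_leaf]; ring
  | node l r ihl ihr =>
    rw [overConv_node (overConv f g) h, overConv_node f g, ihl,
      overConv_node f (overConv g h), overConv_leaf]
    have : (fun x => overConv g h (node x r))
        = fun x => g (node x r) * h leaf + overConv g (fun y => h (node y r)) x := by
      funext x; rw [overConv_node]
    rw [this, overConv_add_right, overConv_mul_right]
    ring

lemma underConv_assoc (g h : PBT → R) : ∀ (f : PBT → R) (w : PBT),
    underConv (underConv f g) h w = underConv f (underConv g h) w := by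
  intro f w
  induction w generalizing f with
  | leaf => simp [underConv_leaf]; ring
  | node l r ihl ihr =>
    rw [underConv_node, underConv_node, underConv_leaf]
    have : (fun x => underConv f g (node l x))
        = fun x => f leaf * g (node l x) + underConv (fun y => f (node l y)) g x := by
      funext x; rw [underConv_node]
    rw [this, underConv_add_left, underConv_mul_left, ihr, underConv_node]
    ring

/-! ### Mixed (duplicial) law -/

lemma underConv_overConv (f g h : PBT → R) (hg : g leaf = 0) (w : PBT) :
    underConv (overConv f g) h w = overConv f (underConv g h) w := by
  cases w with
  | leaf => simp [underConv_leaf, overConv_leaf, hg]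
  | node l r =>
    rw [underConv_node, overConv_node, overConv_leaf, underConv_leaf, hg]
    have e1 : (fun x => overConv f g (node l x))
        = fun x => overConv f (fun y => g (node y x)) l := by
      funext x; rw [overConv_node, hg]; ring_nf
    have e2 : (fun y => underConv g h (node y r))
        = fun y => underConv (fun x => g (node y x)) h r := by
      funext y; rw [underConv_node, hg]; ring_nf
    rw [e1, e2]
    simp only [mul_zero, zero_mul, zero_add, add_zero]
    -- both sides are double sums; swap
    simp only [underConv, overConv]
    exact lsum_swap_mul (overFactors l) (underFactors r) _ _ _

end PBT
namespace PBT

variable {R : Type*} [CommRing R]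

/-! ### treePow lemmas -/

@[simp] lemma treePow_leaf (B : PBT → R) : treePow B leaf = unitSer := rfl

lemma treePow_node (B : PBT → R) (l r : PBT) :
    treePow B (node l r) = underConv (overConv (treePow B l) B) (treePow B r) := rfl

lemma treePow_under (B : PBT → R) (u : PBT) : ∀ (v : PBT) (w : PBT),
    treePow B (under u v) w = underConv (treePow B u) (treePow B v) w := by
  induction u with
  | leaf =>
    intro v w
    simp [underConv_unit_left]
  | node l r ihl ihr =>
    intro v w
    rw [under_node, treePow_node, treePow_node]
    have : treePow B (under r v) = underConv (treePow B r) (treePow B v) := by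
      funext x; exact ihr v x
    rw [this, ← underConv_assoc]

lemma treePow_over (B : PBT → R) (hB0 : B leaf = 0) (u : PBT) : ∀ (v : PBT) (w : PBT),
    treePow B (overT u v) w = overConv (treePow B u) (treePow B v) w := by
  intro v
  induction v with
  | leaf =>
    intro w
    simp [overConv_unit_right]
  | node l r ihl ihr =>
    intro w
    rw [over_node, treePow_node, treePow_node]
    have h1 : treePow B (overT u l) = overConv (treePow B u) (treePow B l) := by
      funext x; exact ihl x
    rw [h1]
    have h2 : overConv (overConv (treePow B u) (treePow B l)) B
        = overConv (treePow B u) (overConv (treePow B l) B) := by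
      funext x; exact overConv_assoc _ _ _ x
    rw [h2]
    exact underConv_overConv _ _ _ (by rw [overConv_leaf, hB0, mul_zero]) w

lemma treePow_Y (B : PBT → R) : treePow B (node leaf leaf) = B := by
  funext w
  rw [treePow_node, treePow_leaf]
  have : overConv (unitSer : PBT → R) B = B := by
    funext x; exact overConv_unit_left B x
  rw [this]
  exact underConv_unit_right B w

lemma treePow_node_leaf (B : PBT → R) (l : PBT) :
    treePow B (node l leaf) = overConv (treePow B l) B := by
  funext w
  rw [treePow_node, treePow_leaf]
  exact underConv_unit_right _ w

lemma treePow_node_leaf_left (B : PBT → R) (r : PBT) :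
    treePow B (node leaf r) = underConv B (treePow B r) := by
  funext w
  rw [treePow_node, treePow_leaf]
  have : overConv (unitSer : PBT → R) B = B := by
    funext x; exact overConv_unit_left B x
  rw [this]

/-- Support lemma: `B^t` vanishes on trees smaller than `t` when `B leaf = 0`. -/
lemma treePow_eq_zero (B : PBT → R) (hB0 : B leaf = 0) :
    ∀ (t w : PBT), size w < size t → treePow B t w = 0 := by
  intro t
  induction t with
  | leaf => intro w hw; simp [size] at hw
  | node l r ihl ihr =>
    intro w hw
    rw [treePow_node]
    unfold underConv
    apply lsum_eq_zero
    intro p hp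
    have hps := size_underFactors hp
    unfold overConv
    rw [← lsum_mul_right]
    apply lsum_eq_zero
    intro q hq
    have hqs := size_overFactors hq
    by_cases h1 : size q.1 < size l
    · rw [ihl q.1 h1]; ring
    · by_cases h2 : size p.2 < size r
      · rw [ihr p.2 h2]; ring
      · have : size q.2 = 0 := by simp [size_node] at hw; omega
        rw [size_eq_zero this, hB0]; ring

end PBT
namespace PBT

variable {R : Type*} [CommRing R]

/-! ### treesOfSize -/

lemma treesOfSize_zero : treesOfSize 0 = [leaf] := by rw [treesOfSize]

lemma treesOfSize_succ (n : ℕ) : treesOfSize (n + 1) =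
    (List.range (n + 1)).attach.flatMap (fun i =>
      (treesOfSize i.1).flatMap (fun l =>
        (treesOfSize (n - i.1)).map (fun r => node l r))) := by
  rw [treesOfSize]

lemma size_of_mem_treesOfSize : ∀ n, ∀ t ∈ treesOfSize n, size t = n := by
  intro n
  induction n using Nat.strong_induction_on with
  | _ n ih =>
    match n with
    | 0 =>
      intro t ht
      rw [treesOfSize_zero] at ht
      simp at ht
      simp [ht]
    | n + 1 =>
      intro t ht
      rw [treesOfSize_succ] at ht
      simp only [List.mem_flatMap, List.mem_map, List.mem_attach, true_and] at ht
      obtain ⟨i, l, hl, r, hr, rfl⟩ := ht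
      have hi : i.1 < n + 1 := List.mem_range.mp i.2
      have h1 := ih i.1 hi l hl
      have h2 := ih (n - i.1) (by omega) r hr
      simp [size, h1, h2]
      omega

lemma mem_treesOfSize_self : ∀ t : PBT, t ∈ treesOfSize (size t) := by
  intro t
  induction t with
  | leaf => simp only [size_leaf]; rw [treesOfSize_zero]; simp
  | node l r ihl ihr =>
    have : size (node l r) = (size l + size r) + 1 := by simp [size]
    rw [this, treesOfSize_succ]
    simp only [List.mem_flatMap, List.mem_map, List.mem_attach, true_and]
    refine ⟨⟨size l, List.mem_range.mpr (by omega)⟩, l, ihl, r, ?_, rfl⟩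
    have : size l + size r - size l = size r := by omega
    rw [this]
    exact ihr

lemma mem_treesOfSize {n : ℕ} {t : PBT} : t ∈ treesOfSize n ↔ size t = n := by
  constructor
  · exact size_of_mem_treesOfSize n t
  · rintro rfl; exact mem_treesOfSize_self t

lemma nodup_treesOfSize : ∀ n, (treesOfSize n).Nodup := by
  intro n
  induction n using Nat.strong_induction_on with
  | _ n ih =>
    match n with
    | 0 => rw [treesOfSize_zero]; simp
    | n + 1 =>
      rw [treesOfSize_succ]
      rw [List.nodup_flatMap]
      constructor
      · intro i _
        rw [List.nodup_flatMap]
        constructor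
        · intro l _
          exact (ih (n - i.1) (by omega)).map (fun a b h => by injection h)
        · apply List.Pairwise.imp ?_ (ih i.1 (List.mem_range.mp i.2))
          intro a b hab
          intro x hxa hxb
          simp only [List.mem_map] at hxa hxb
          obtain ⟨r1, _, rfl⟩ := hxa
          obtain ⟨r2, _, h⟩ := hxb
          injection h with h1 h2
          exact hab h1.symm
      · apply List.Pairwise.imp ?_ (List.nodup_attach.mpr List.nodup_range)
        intro a b hab x hxa hxb
        simp only [Function.comp, List.mem_flatMap, List.mem_map] at hxa hxb
        obtain ⟨l1, hl1, r1, _, rfl⟩ := hxa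
        obtain ⟨l2, hl2, r2, _, h⟩ := hxb
        injection h with h1 h2
        subst h1
        exact hab (Subtype.ext (by
          rw [← size_of_mem_treesOfSize _ _ hl1, ← size_of_mem_treesOfSize _ _ hl2]))

/-- The list of all trees of size `< n`. -/
def allTrees (n : ℕ) : List PBT := (List.range n).flatMap treesOfSize

lemma mem_allTrees {n : ℕ} {t : PBT} : t ∈ allTrees n ↔ size t < n := by
  simp only [allTrees, List.mem_flatMap, List.mem_range]
  constructor
  · rintro ⟨i, hi, ht⟩
    rw [mem_treesOfSize.mp ht]; exact hi
  · intro h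
    exact ⟨size t, h, mem_treesOfSize_self t⟩

lemma nodup_allTrees (n : ℕ) : (allTrees n).Nodup := by
  rw [allTrees, List.nodup_flatMap]
  refine ⟨fun i _ => nodup_treesOfSize i, ?_⟩
  apply List.Pairwise.imp ?_ List.nodup_range
  intro a b hab x hxa hxb
  exact hab (by rw [← mem_treesOfSize.mp hxa, ← mem_treesOfSize.mp hxb])

/-- The finset of all trees of size `< n`. -/
def SS (n : ℕ) : Finset PBT := (allTrees n).toFinset

lemma mem_SS {n : ℕ} {t : PBT} : t ∈ SS n ↔ size t < n := by
  rw [SS, List.mem_toFinset, mem_allTrees]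

lemma SS_mono {m n : ℕ} (h : m ≤ n) : SS m ⊆ SS n := by
  intro t ht
  rw [mem_SS] at *
  omega

lemma comp_eq (f B : PBT → R) (w : PBT) :
    comp f B w = ∑ t ∈ SS (size w + 1), f t * treePow B t w := by
  rw [comp, SS, List.sum_toFinset _ (nodup_allTrees _)]
  rfl

/-- Padding: the sum may be taken overT any large enough finset. -/
lemma comp_pad (f B : PBT → R) (hB0 : B leaf = 0) {w : PBT} {k : ℕ} (h : size w < k) :
    comp f B w = ∑ t ∈ SS k, f t * treePow B t w := by
  rw [comp_eq]
  apply Finset.sum_subset (SS_mono (by omega))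
  intro t ht hnt
  rw [mem_SS] at ht hnt
  rw [treePow_eq_zero B hB0 t w (by omega), mul_zero]

end PBT
namespace PBT

variable {R : Type*} [CommRing R]

/-! ### Shape of products with `Yser` -/

@[simp] lemma Yser_leaf : (Yser : PBT → R) leaf = 0 := by simp [Yser]

lemma overConv_Yser_leaf (f : PBT → R) : overConv f Yser leaf = 0 := by
  simp [overConv_leaf]

lemma overConv_Yser_node (f : PBT → R) (l r : PBT) :
    overConv f Yser (node l r) = if r = leaf then f l else 0 := by
  rw [overConv_node]
  simp only [Yser_leaf, mul_zero, zero_add]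
  by_cases hr : r = leaf
  · subst hr
    have : (fun x => (Yser : PBT → R) (node x leaf)) = unitSer := by
      funext x
      simp [Yser, unitSer]
    rw [this, overConv_unit_right, if_pos rfl]
  · have : (fun x => (Yser : PBT → R) (node x r)) = fun _ => (0 : R) := by
      funext x
      simp [Yser, hr]
    rw [this, overConv_zero_right, if_neg hr]

lemma underConv_Yser_leaf (f : PBT → R) : underConv Yser f leaf = 0 := by
  simp [underConv_leaf]

lemma underConv_Yser_node (f : PBT → R) (l r : PBT) :
    underConv Yser f (node l r) = if l = leaf then f r else 0 := by
  rw [underConv_node]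
  simp only [Yser_leaf, zero_mul, zero_add]
  by_cases hl : l = leaf
  · subst hl
    have : (fun x => (Yser : PBT → R) (node leaf x)) = unitSer := by
      funext x
      simp [Yser, unitSer]
    rw [this, underConv_unit_left, if_pos rfl]
  · have : (fun x => (Yser : PBT → R) (node l x)) = fun _ => (0 : R) := by
      funext x
      simp [Yser, hl]
    rw [this, underConv_zero_left, if_neg hl]

lemma underConv_overConv_Yser_leaf (f g : PBT → R) :
    underConv (overConv f Yser) g leaf = 0 := by
  simp [underConv_leaf, overConv_Yser_leaf]

lemma underConv_overConv_Yser_node (f g : PBT → R) (l r : PBT) :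
    underConv (overConv f Yser) g (node l r) = f l * g r := by
  rw [underConv_node, overConv_Yser_leaf, zero_mul, zero_add]
  have : (fun x => overConv f Yser (node l x)) = fun x => f l * unitSer x := by
    funext x
    rw [overConv_Yser_node]
    by_cases hx : x = leaf <;> simp [hx, unitSer]
  rw [this, underConv_mul_left, underConv_unit_left]

/-! ### Expansion lemmas for convolutions with `comp` -/

lemma overConv_comp (f B : PBT → R) (hB0 : B leaf = 0) {u : PBT} {k : ℕ}
    (h : size u < k) :
    overConv (comp f B) B u
      = ∑ l ∈ SS k, f l * overConv (treePow B l) B u := by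
  unfold overConv
  have e1 : ∀ p ∈ overFactors u, comp f B p.1 * B p.2
      = ∑ l ∈ SS k, f l * (treePow B l p.1 * B p.2) := by
    intro p hp
    have hps := size_overFactors hp
    rw [comp_pad f B hB0 (k := k) (by omega), Finset.sum_mul]
    apply Finset.sum_congr rfl
    intro l _
    ring
  rw [lsum_congr e1, lsum_fsum]
  apply Finset.sum_congr rfl
  intro l _
  rw [lsum_mul_left]

lemma underConv_comp (g B : PBT → R) (hB0 : B leaf = 0) {u : PBT} {k : ℕ}
    (h : size u < k) :
    underConv B (comp g B) u
      = ∑ r ∈ SS k, g r * underConv B (treePow B r) u := by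
  unfold underConv
  have e1 : ∀ p ∈ underFactors u, B p.1 * comp g B p.2
      = ∑ r ∈ SS k, g r * (B p.1 * treePow B r p.2) := by
    intro p hp
    have hps := size_underFactors hp
    rw [comp_pad g B hB0 (k := k) (by omega), Finset.mul_sum]
    apply Finset.sum_congr rfl
    intro r _
    ring
  rw [lsum_congr e1, lsum_fsum]
  apply Finset.sum_congr rfl
  intro r _
  rw [lsum_mul_left]

/-! ### `comp` with `Yser` -/

lemma comp_Yser (B : PBT → R) (hB0 : B leaf = 0) (w : PBT) :
    comp Yser B w = B w := by
  rw [comp_eq]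
  have e : ∀ t ∈ SS (size w + 1), Yser t * treePow B t w
      = if t = node leaf leaf then treePow B t w else 0 := by
    intro t _
    by_cases ht : t = node leaf leaf <;> simp [Yser, ht]
  rw [Finset.sum_congr rfl e, Finset.sum_ite_eq' (SS (size w + 1)) (node leaf leaf)]
  by_cases hw : size w = 0
  · rw [if_neg (by rw [mem_SS]; simp [size]; omega), size_eq_zero hw, hB0]
  · rw [if_pos (by rw [mem_SS]; simp [size]; omega), treePow_Y]

/-! ### Distribution lemmas -/

lemma comp_over_Yser (f B : PBT → R) (hB0 : B leaf = 0) (w : PBT) :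
    comp (overConv f Yser) B w = overConv (comp f B) B w := by
  set n := size w with hn
  rw [overConv_comp f B hB0 (k := n + 1) (by omega)]
  rw [comp_pad _ B hB0 (k := n + 2) (by omega)]
  rw [show (∑ t ∈ SS (n + 2), overConv f Yser t * treePow B t w)
      = ∑ t ∈ (SS (n+1)).image (fun l => node l leaf),
          overConv f Yser t * treePow B t w from ?side1]
  · rw [Finset.sum_image (by intro x _ y _ h; injection h)]
    apply Finset.sum_congr rfl
    intro l _
    rw [overConv_Yser_node, if_pos rfl, treePow_node_leaf]
  · symm
    apply Finset.sum_subset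
    · intro t ht
      simp only [Finset.mem_image] at ht
      obtain ⟨l, hl, rfl⟩ := ht
      rw [mem_SS] at *
      simp [size]
      omega
    · intro t ht hnt
      cases t with
      | leaf => rw [overConv_Yser_leaf, zero_mul]
      | node l r =>
        by_cases hr : r = leaf
        · subst hr
          exfalso
          apply hnt
          simp only [Finset.mem_image]
          refine ⟨l, ?_, rfl⟩
          rw [mem_SS] at ht ⊢
          simp [size] at ht
          omega
        · rw [overConv_Yser_node, if_neg hr, zero_mul]

lemma comp_under_Yser (f B : PBT → R) (hB0 : B leaf = 0) (w : PBT) :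
    comp (underConv Yser f) B w = underConv B (comp f B) w := by
  set n := size w with hn
  rw [underConv_comp f B hB0 (k := n + 1) (by omega)]
  rw [comp_pad _ B hB0 (k := n + 2) (by omega)]
  rw [show (∑ t ∈ SS (n + 2), underConv Yser f t * treePow B t w)
      = ∑ t ∈ (SS (n+1)).image (fun r => node leaf r),
          underConv Yser f t * treePow B t w from ?side1]
  · rw [Finset.sum_image (by intro x _ y _ h; injection h)]
    apply Finset.sum_congr rfl
    intro r _
    rw [underConv_Yser_node, if_pos rfl, treePow_node_leaf_left]
  · symm
    apply Finset.sum_subset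
    · intro t ht
      simp only [Finset.mem_image] at ht
      obtain ⟨r, hr, rfl⟩ := ht
      rw [mem_SS] at *
      simp [size]
      omega
    · intro t ht hnt
      cases t with
      | leaf => rw [underConv_Yser_leaf, zero_mul]
      | node l r =>
        by_cases hl : l = leaf
        · subst hl
          exfalso
          apply hnt
          simp only [Finset.mem_image]
          refine ⟨r, ?_, rfl⟩
          rw [mem_SS] at ht ⊢
          simp [size] at ht
          omega
        · rw [underConv_Yser_node, if_neg hl, zero_mul]

lemma comp_node_distrib (f g B : PBT → R) (hB0 : B leaf = 0) (w : PBT) :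
    comp (underConv (overConv f Yser) g) B w
      = underConv (overConv (comp f B) B) (comp g B) w := by
  set n := size w with hn
  -- RHS computation
  have rhs : underConv (overConv (comp f B) B) (comp g B) w
      = ∑ l ∈ SS (n+1), ∑ r ∈ SS (n+1),
          f l * g r * treePow B (node l r) w := by
    unfold underConv
    calc ((underFactors w).map
          (fun p => overConv (comp f B) B p.1 * comp g B p.2)).sum
        = ((underFactors w).map (fun p => ∑ l ∈ SS (n+1), ∑ r ∈ SS (n+1),
            f l * g r * (overConv (treePow B l) B p.1 * treePow B r p.2))).sum := by
          apply lsum_congr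
          intro p hp
          have hps := size_underFactors hp
          rw [overConv_comp f B hB0 (k := n + 1) (by omega),
            comp_pad g B hB0 (k := n + 1) (by omega), Finset.sum_mul_sum]
          apply Finset.sum_congr rfl
          intro l _
          apply Finset.sum_congr rfl
          intro r _
          ring
      _ = ∑ l ∈ SS (n+1), ((underFactors w).map (fun p => ∑ r ∈ SS (n+1),
            f l * g r * (overConv (treePow B l) B p.1 * treePow B r p.2))).sum := by
          rw [lsum_fsum]
      _ = ∑ l ∈ SS (n+1), ∑ r ∈ SS (n+1), ((underFactors w).map (fun p =>
            f l * g r * (overConv (treePow B l) B p.1 * treePow B r p.2))).sum := by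
          apply Finset.sum_congr rfl
          intro l _
          rw [lsum_fsum]
      _ = ∑ l ∈ SS (n+1), ∑ r ∈ SS (n+1),
            f l * g r * treePow B (node l r) w := by
          apply Finset.sum_congr rfl
          intro l _
          apply Finset.sum_congr rfl
          intro r _
          rw [treePow_node]
          unfold underConv
          rw [← lsum_mul_left]
  rw [rhs, comp_pad _ B hB0 (k := 2*n + 2) (by omega)]
  rw [show (∑ t ∈ SS (2*n + 2), underConv (overConv f Yser) g t * treePow B t w)
      = ∑ t ∈ ((SS (n+1)) ×ˢ (SS (n+1))).image (fun p => node p.1 p.2),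
          underConv (overConv f Yser) g t * treePow B t w from ?side1]
  · rw [Finset.sum_image (by
      intro x _ y _ h
      injection h with h1 h2
      exact Prod.ext h1 h2)]
    rw [Finset.sum_product]
    apply Finset.sum_congr rfl
    intro l _
    apply Finset.sum_congr rfl
    intro r _
    rw [underConv_overConv_Yser_node]
  · symm
    apply Finset.sum_subset
    · intro t ht
      simp only [Finset.mem_image, Finset.mem_product] at ht
      obtain ⟨p, ⟨h1, h2⟩, rfl⟩ := ht
      rw [mem_SS] at *
      simp [size]
      omega
    · intro t ht hnt
      cases t with
      | leaf => rw [underConv_overConv_Yser_leaf, zero_mul]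
      | node l r =>
        rw [mem_SS] at ht
        have : ¬ (size l < n + 1 ∧ size r < n + 1) := by
          intro ⟨h1, h2⟩
          apply hnt
          simp only [Finset.mem_image, Finset.mem_product]
          exact ⟨(l, r), ⟨mem_SS.mpr h1, mem_SS.mpr h2⟩, rfl⟩
        have hsz : size w < size (node l r) := by
          simp [size] at *
          omega
        rw [treePow_eq_zero B hB0 _ _ hsz, mul_zero]

end PBT
namespace PBT

variable {R : Type*} [CommRing R]

lemma comp_leaf_eq_zero (A B : PBT → R) (hA0 : A leaf = 0) : comp A B leaf = 0 := by
  rw [comp_eq]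
  have hS : SS 1 = {leaf} := by
    ext t
    rw [mem_SS, Finset.mem_singleton]
    constructor
    · intro h
      exact size_eq_zero (by omega)
    · rintro rfl
      simp
  rw [show size leaf + 1 = 1 from rfl, hS, Finset.sum_singleton, hA0, zero_mul]

lemma pos_size_of_ne_leaf {t : PBT} (h : t ≠ leaf) : 0 < size t :=
  Nat.pos_of_ne_zero (fun h0 => h (size_eq_zero h0))

/-- The main theorem, for a general commutative ring and parameter. -/
theorem comp_inverse (A B : PBT → R) (c : R)
    (hA0 : A leaf = 0) (hB0 : B leaf = 0)
    (hA : ∀ t : PBT, A t = Yser t + c * overConv A Yser t + underConv Yser A t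
        + c * underConv (overConv A Yser) A t)
    (hB : ∀ t : PBT, B t = Yser t - c * overConv Yser B t - underConv B Yser t
        - c * underConv (overConv Yser B) Yser t) :
    comp A B = Yser := by
  -- Step 1: the composition satisfies the "A-equation" with `Yser` replaced by `B`.
  have eqD : ∀ w : PBT, comp A B w
      = B w + c * overConv (comp A B) B w + underConv B (comp A B) w
        + c * underConv (overConv (comp A B) B) (comp A B) w := by
    intro w
    have expand : comp A B w
        = comp Yser B w + c * comp (overConv A Yser) B w + comp (underConv Yser A) B w
          + c * comp (underConv (overConv A Yser) A) B w := by
      rw [comp_eq, comp_eq, comp_eq, comp_eq, comp_eq, Finset.mul_sum, Finset.mul_sum,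
        ← Finset.sum_add_distrib, ← Finset.sum_add_distrib, ← Finset.sum_add_distrib]
      apply Finset.sum_congr rfl
      intro t _
      rw [hA t]
      ring
    rw [expand, comp_Yser B hB0, comp_over_Yser A B hB0, comp_under_Yser A B hB0,
      comp_node_distrib A A B hB0]
  -- Step 2: uniqueness of the fixed point, by strong induction on the size.
  suffices H : ∀ (n : ℕ) (w : PBT), size w = n → comp A B w = Yser w by
    funext w
    exact H (size w) w rfl
  intro n
  induction n using Nat.strong_induction_on with
  | _ n ih =>
    intro w hw
    have ihw : ∀ v : PBT, size v < size w → comp A B v = Yser v := by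
      intro v hv
      exact ih (size v) (by omega) v rfl
    rw [eqD w]
    have h1 : overConv (comp A B) B w = overConv Yser B w := by
      unfold overConv
      apply lsum_congr
      intro p hp
      have hps := size_overFactors hp
      by_cases h2 : p.2 = leaf
      · rw [h2, hB0, mul_zero, mul_zero]
      · have := pos_size_of_ne_leaf h2
        rw [ihw p.1 (by omega)]
    have h2 : underConv B (comp A B) w = underConv B Yser w := by
      unfold underConv
      apply lsum_congr
      intro p hp
      have hps := size_underFactors hp
      by_cases h2 : p.1 = leaf
      · rw [h2, hB0, zero_mul, zero_mul]
      · have := pos_size_of_ne_leaf h2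
        rw [ihw p.2 (by omega)]
    have h3 : underConv (overConv (comp A B) B) (comp A B) w
        = underConv (overConv Yser B) Yser w := by
      unfold underConv
      apply lsum_congr
      intro p hp
      have hps := size_underFactors hp
      by_cases hp2 : p.2 = leaf
      · rw [hp2, comp_leaf_eq_zero A B hA0, Yser_leaf, mul_zero, mul_zero]
      · by_cases hp1 : p.1 = leaf
        · rw [hp1, overConv_leaf, overConv_leaf, hB0, mul_zero, mul_zero,
            zero_mul, zero_mul]
        · have hpos1 := pos_size_of_ne_leaf hp1
          have hpos2 := pos_size_of_ne_leaf hp2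
          rw [ihw p.2 (by omega)]
          congr 1
          unfold overConv
          apply lsum_congr
          intro q hq
          have hqs := size_overFactors hq
          rw [ihw q.1 (by omega)]
    rw [h1, h2, h3]
    linear_combination hB w

end PBT
open PBT Polynomial in
/-- if `A = Y + w (A/Y) + (Y∖A) + w (A/Y∖A)` and
`B = Y - w (Y/B) - (B∖Y) - w (Y/B∖Y)` (series with coefficients in `ℚ[w]`,
vanishing on the root tree), then `A ∘ B = Y`: `A` is the compositional
inverse of `B` in the group of tree-expanded formal diffeomorphisms. -/
theorem comp_inverse_AB (A B : PBT → Polynomial ℚ)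
    (hA0 : A PBT.leaf = 0) (hB0 : B PBT.leaf = 0)
    (hA : ∀ t : PBT, A t = Yser t + X * overConv A Yser t + underConv Yser A t
        + X * underConv (overConv A Yser) A t)
    (hB : ∀ t : PBT, B t = Yser t - X * overConv Yser B t - underConv B Yser t
        - X * underConv (overConv Yser B) Yser t) :
    comp A B = Yser := by
  exact PBT.comp_inverse A B Polynomial.X hA0 hB0 hA hB
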